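/- Let h > 0, T > 0, k, w ∈ C²([0,h]) with k > 0 on [0,h] and w(0) = w(h) = 0, let F ∈ C([0,T]), and let q be a classical solution of the transport equation with flux F and initial data q₀ ∈ C¹([0,h]). Then for each t* ∈ [0,T] there exists z* ∈ [0,h] such that q(z*,t*) = (1/h) ( ∫₀ʰ q₀(z) dz + k(0) ∫₀^{t*} F(t) dt ). -/

import Mathlib

open MeasureTheory Set Filter intervalIntegral

/-- A classical solution of the transport equation `q_t + (w q)_z = (k q_z)_z`
on `[0,h] × (0,T]` with flux boundary condition `q_z(0,t) = -F(t)`,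
no-flux upper boundary condition `q_z(h,t) = 0`, and initial data `q₀`,
together with its partial derivatives `qz`, `qzz`, `qt`. -/
structure ClassicalSolution (h T : ℝ) (k w F q₀ : ℝ → ℝ)
    (q qz qzz qt : ℝ → ℝ → ℝ) : Prop where
  cont : ContinuousOn (fun x : ℝ × ℝ => q x.1 x.2) (Icc 0 h ×ˢ Icc 0 T)
  hasDeriv_z : ∀ z ∈ Icc (0:ℝ) h, ∀ t ∈ Ioc (0:ℝ) T,
    HasDerivWithinAt (fun z' => q z' t) (qz z t) (Icc 0 h) z
  hasDeriv_zz : ∀ z ∈ Icc (0:ℝ) h, ∀ t ∈ Ioc (0:ℝ) T,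
    HasDerivWithinAt (fun z' => qz z' t) (qzz z t) (Icc 0 h) z
  hasDeriv_t : ∀ z ∈ Icc (0:ℝ) h, ∀ t ∈ Ioc (0:ℝ) T,
    HasDerivWithinAt (fun t' => q z t') (qt z t) (Icc 0 T) t
  cont_z : ContinuousOn (fun x : ℝ × ℝ => qz x.1 x.2) (Icc 0 h ×ˢ Ioc 0 T)
  cont_zz : ContinuousOn (fun x : ℝ × ℝ => qzz x.1 x.2) (Icc 0 h ×ˢ Ioc 0 T)
  cont_t : ContinuousOn (fun x : ℝ × ℝ => qt x.1 x.2) (Icc 0 h ×ˢ Ioc 0 T)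
  pde : ∀ z ∈ Icc (0:ℝ) h, ∀ t ∈ Ioc (0:ℝ) T,
    qt z t + (derivWithin w (Icc 0 h) z * q z t + w z * qz z t)
      = derivWithin k (Icc 0 h) z * qz z t + k z * qzz z t
  bc_lower : ∀ t ∈ Ioc (0:ℝ) T, qz 0 t = -F t
  bc_upper : ∀ t ∈ Ioc (0:ℝ) T, qz h t = 0
  ic : ∀ z ∈ Icc (0:ℝ) h, q z 0 = q₀ z

/-- `q` is a classical solution of the transport equation (partial derivatives exist). -/
def IsClassicalSolution (h T : ℝ) (k w F q₀ : ℝ → ℝ) (q : ℝ → ℝ → ℝ) : Prop :=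
  ∃ qz qzz qt, ClassicalSolution h T k w F q₀ q qz qzz qt


lemma exists_eq_avg {h : ℝ} (hh : 0 < h) (f : ℝ → ℝ) (hf : ContinuousOn f (Icc 0 h)) :
    ∃ z ∈ Icc (0:ℝ) h, f z = (1/h) * ∫ x in (0:ℝ)..h, f x := by
  obtain ⟨zm, hzm, hmin⟩ := isCompact_Icc.exists_isMinOn ⟨0, left_mem_Icc.2 hh.le⟩ hf
  obtain ⟨zM, hzM, hmax⟩ := isCompact_Icc.exists_isMaxOn ⟨0, left_mem_Icc.2 hh.le⟩ hf
  have hint : IntervalIntegrable f volume 0 h :=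
    (hf.mono (by rw [uIcc_of_le hh.le])).intervalIntegrable
  have h1 : h * f zm ≤ ∫ x in (0:ℝ)..h, f x := by
    have := intervalIntegral.integral_mono_on hh.le (_root_.intervalIntegrable_const (c := f zm))
      hint (fun x hx => hmin hx)
    simpa using this
  have h2 : (∫ x in (0:ℝ)..h, f x) ≤ h * f zM := by
    have := intervalIntegral.integral_mono_on hh.le hint
      (_root_.intervalIntegrable_const (c := f zM)) (fun x hx => hmax hx)
    simpa using this
  set A := (1/h) * ∫ x in (0:ℝ)..h, f x with hA
  have hA1 : f zm ≤ A := by rw [hA]; rw [div_mul_eq_mul_div, le_div_iff₀ hh]; linarith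
  have hA2 : A ≤ f zM := by rw [hA]; rw [div_mul_eq_mul_div, div_le_iff₀ hh]; linarith
  have hsub : uIcc zm zM ⊆ Icc 0 h := by
    rw [← uIcc_of_le hh.le]
    exact uIcc_subset_uIcc (by rwa [uIcc_of_le hh.le]) (by rwa [uIcc_of_le hh.le])
  have := intermediate_value_uIcc (hf.mono hsub)
  have hAmem : A ∈ uIcc (f zm) (f zM) := by
    rw [uIcc_of_le (le_trans hA1 hA2)]; exact ⟨hA1, hA2⟩
  obtain ⟨z, hz, hzA⟩ := this hAmem
  exact ⟨z, hsub hz, hzA⟩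

/-- For each time `t* ∈ [0,T]` there is a point `z* ∈ [0,h]` at which the solution
equals the average value `(1/h)(∫₀ʰ q₀ + k(0) ∫₀^{t*} F)`. -/
theorem exists_point_eq_mean_value
    (h T : ℝ) (hh : 0 < h) (hT : 0 < T) (k w F q₀ : ℝ → ℝ)
    (hk : ContDiffOn ℝ 2 k (Icc 0 h)) (hw : ContDiffOn ℝ 2 w (Icc 0 h))
    (hkpos : ∀ z ∈ Icc (0:ℝ) h, 0 < k z)
    (hw0 : w 0 = 0) (hwh : w h = 0)
    (hF : ContinuousOn F (Icc 0 T)) (hq₀ : ContDiffOn ℝ 1 q₀ (Icc 0 h))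
    (q : ℝ → ℝ → ℝ) (hq : IsClassicalSolution h T k w F q₀ q) :
    ∀ tstar ∈ Icc (0:ℝ) T, ∃ zstar ∈ Icc (0:ℝ) h,
      q zstar tstar =
        (1 / h) * ((∫ z in (0:ℝ)..h, q₀ z) + k 0 * ∫ t in (0:ℝ)..tstar, F t) := by
  intro tstar htstar
  obtain ⟨qz, qzz, qt, S⟩ := hq
  have sliceq : ∀ t ∈ Icc (0:ℝ) T, ContinuousOn (fun z => q z t) (Icc 0 h) := by
    intro t ht
    exact S.cont.comp (Continuous.continuousOn (continuous_id.prodMk continuous_const))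
      (fun z hz => ⟨hz, ht⟩)
  have sliceqz : ∀ t ∈ Ioc (0:ℝ) T, ContinuousOn (fun z => qz z t) (Icc 0 h) := by
    intro t ht
    exact S.cont_z.comp (Continuous.continuousOn (continuous_id.prodMk continuous_const))
      (fun z hz => ⟨hz, ht⟩)
  have sliceqt : ∀ t ∈ Ioc (0:ℝ) T, ContinuousOn (fun z => qt z t) (Icc 0 h) := by
    intro t ht
    exact S.cont_t.comp (Continuous.continuousOn (continuous_id.prodMk continuous_const))
      (fun z hz => ⟨hz, ht⟩)
  have huIcc : uIcc (0:ℝ) h = Icc 0 h := uIcc_of_le hh.le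
  have huIoc : uIoc (0:ℝ) h = Ioc 0 h := uIoc_of_le hh.le
  have measq : ∀ t ∈ Icc (0:ℝ) T,
      AEStronglyMeasurable (fun z => q z t) (volume.restrict (uIoc (0:ℝ) h)) := by
    intro t ht
    rw [huIoc]
    exact ((sliceq t ht).mono Ioc_subset_Icc_self).aestronglyMeasurable measurableSet_Ioc
  have measqt : ∀ t ∈ Ioc (0:ℝ) T,
      AEStronglyMeasurable (fun z => qt z t) (volume.restrict (uIoc (0:ℝ) h)) := by
    intro t ht
    rw [huIoc]
    exact ((sliceqt t ht).mono Ioc_subset_Icc_self).aestronglyMeasurable measurableSet_Ioc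
  -- Step A: FTC in the z variable
  have hA : ∀ t ∈ Ioc (0:ℝ) T, (∫ z in (0:ℝ)..h, qt z t) = k 0 * F t := by
    intro t ht
    set g : ℝ → ℝ := fun z => k z * qz z t - w z * q z t with hg
    have hcontg : ContinuousOn g (Icc 0 h) :=
      (hk.continuousOn.mul (sliceqz t ht)).sub
        (hw.continuousOn.mul (sliceq t (Ioc_subset_Icc_self ht)))
    have hderivg : ∀ z ∈ Ioo (0:ℝ) h, HasDerivAt g (qt z t) z := by
      intro z hz
      have hnz : Icc (0:ℝ) h ∈ nhds z := Icc_mem_nhds hz.1 hz.2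
      have hzm : z ∈ Icc (0:ℝ) h := Ioo_subset_Icc_self hz
      have dk : HasDerivAt k (derivWithin k (Icc 0 h) z) z :=
        (((hk.differentiableOn (by norm_num)) z hzm).hasDerivWithinAt).hasDerivAt hnz
      have dw : HasDerivAt w (derivWithin w (Icc 0 h) z) z :=
        (((hw.differentiableOn (by norm_num)) z hzm).hasDerivWithinAt).hasDerivAt hnz
      have dq : HasDerivAt (fun z' => q z' t) (qz z t) z :=
        (S.hasDeriv_z z hzm t ht).hasDerivAt hnz
      have dqz : HasDerivAt (fun z' => qz z' t) (qzz z t) z :=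
        (S.hasDeriv_zz z hzm t ht).hasDerivAt hnz
      have hprod := (dk.mul dqz).sub (dw.mul dq)
      have hpde := S.pde z hzm t ht
      exact hprod.congr_deriv (by linarith)
    have hintqt : IntervalIntegrable (fun z => qt z t) volume 0 h :=
      ((sliceqt t ht).mono (by rw [huIcc])).intervalIntegrable
    have hftc := intervalIntegral.integral_eq_sub_of_hasDeriv_right_of_le hh.le hcontg
      (fun z hz => (hderivg z hz).hasDerivWithinAt) hintqt
    rw [hftc, hg]
    simp [S.bc_upper t ht, S.bc_lower t ht, hw0, hwh]
  set M : ℝ → ℝ := fun t => ∫ z in (0:ℝ)..h, q z t with hM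
  obtain ⟨C, hC⟩ := (isCompact_Icc.prod isCompact_Icc).exists_bound_of_continuousOn S.cont
  -- continuity of M
  have hMcont : ContinuousOn M (Icc 0 T) := by
    intro t₀ ht₀
    apply intervalIntegral.continuousWithinAt_of_dominated_interval (bound := fun _ => C)
    · filter_upwards [self_mem_nhdsWithin] with t ht
      exact measq t ht
    · filter_upwards [self_mem_nhdsWithin] with t ht
      refine ae_of_all _ (fun z hz => ?_)
      rw [huIoc] at hz
      exact hC (z, t) ⟨Ioc_subset_Icc_self hz, ht⟩
    · exact _root_.intervalIntegrable_const
    · refine ae_of_all _ (fun z hz => ?_)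
      rw [huIoc] at hz
      exact (S.cont.comp (Continuous.continuousOn (continuous_const.prodMk continuous_id))
        (fun t ht => ⟨Ioc_subset_Icc_self hz, ht⟩)) t₀ ht₀
  -- derivative of M on the interior
  have hM' : ∀ t₀ ∈ Ioo (0:ℝ) T, HasDerivAt M (k 0 * F t₀) t₀ := by
    intro t₀ ht₀
    set ε : ℝ := min t₀ (T - t₀) / 2 with hε
    have hεt : ε ≤ t₀ / 2 := by
      rw [hε]; gcongr; exact min_le_left _ _
    have hεT : ε ≤ (T - t₀) / 2 := by
      rw [hε]; gcongr; exact min_le_right _ _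
    have hεpos : 0 < ε := by
      rw [hε]; apply div_pos _ (by norm_num); exact lt_min ht₀.1 (by linarith [ht₀.2])
    have hballIcc : Metric.ball t₀ ε ⊆ Icc (t₀ - ε) (t₀ + ε) := by
      intro t ht
      rw [Metric.mem_ball, Real.dist_eq, abs_lt] at ht
      exact ⟨by linarith [ht.1], by linarith [ht.2]⟩
    have hIccIoo : Icc (t₀ - ε) (t₀ + ε) ⊆ Ioo 0 T := by
      intro t ht
      exact ⟨by linarith [ht.1, ht₀.1], by linarith [ht.2, ht₀.2]⟩
    have hKsub : Icc (0:ℝ) h ×ˢ Icc (t₀ - ε) (t₀ + ε) ⊆ Icc 0 h ×ˢ Ioc 0 T := by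
      refine prod_mono subset_rfl (fun t ht => ?_)
      have := hIccIoo ht
      exact ⟨this.1, this.2.le⟩
    obtain ⟨C', hC'⟩ := (isCompact_Icc.prod isCompact_Icc).exists_bound_of_continuousOn
      (S.cont_t.mono hKsub)
    have key := (intervalIntegral.hasDerivAt_integral_of_dominated_loc_of_deriv_le
      (F := fun t z => q z t) (F' := fun t z => qt z t) (x₀ := t₀) (a := 0) (b := h)
      (bound := fun _ => C') (Metric.ball_mem_nhds t₀ hεpos)
      (by
        filter_upwards [isOpen_Ioo.mem_nhds ht₀] with t ht
        exact measq t ⟨ht.1.le, ht.2.le⟩)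
      (((sliceq t₀ ⟨ht₀.1.le, ht₀.2.le⟩).mono (by rw [huIcc])).intervalIntegrable)
      (measqt t₀ ⟨ht₀.1, ht₀.2.le⟩)
      (ae_of_all _ (fun z hz t ht => by
        rw [huIoc] at hz
        exact hC' (z, t) ⟨Ioc_subset_Icc_self hz, hballIcc ht⟩))
      _root_.intervalIntegrable_const
      (ae_of_all _ (fun z hz t ht => by
        rw [huIoc] at hz
        have htm : t ∈ Ioo (0:ℝ) T := hIccIoo (hballIcc ht)
        exact (S.hasDeriv_t z (Ioc_subset_Icc_self hz) t ⟨htm.1, htm.2.le⟩).hasDerivAt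
          (Icc_mem_nhds htm.1 htm.2)))).2
    rw [hA t₀ ⟨ht₀.1, ht₀.2.le⟩] at key
    exact key
  -- value of M
  have hM0 : M 0 = ∫ z in (0:ℝ)..h, q₀ z := by
    apply intervalIntegral.integral_congr
    intro z hz
    rw [huIcc] at hz
    exact S.ic z hz
  have hMval : M tstar = (∫ z in (0:ℝ)..h, q₀ z) + k 0 * ∫ t in (0:ℝ)..tstar, F t := by
    rcases eq_or_lt_of_le htstar.1 with h0 | h0
    · simp [← h0, hM0]
    · have hcontF : IntervalIntegrable (fun t => k 0 * F t) volume 0 tstar := by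
        apply ContinuousOn.intervalIntegrable
        rw [uIcc_of_le htstar.1]
        exact continuousOn_const.mul (hF.mono (Icc_subset_Icc le_rfl htstar.2))
      have hftc := intervalIntegral.integral_eq_sub_of_hasDeriv_right_of_le h0.le
        (hMcont.mono (Icc_subset_Icc le_rfl htstar.2))
        (fun t ht => (hM' t ⟨ht.1, lt_of_lt_of_le ht.2 htstar.2⟩).hasDerivWithinAt)
        hcontF
      rw [intervalIntegral.integral_const_mul] at hftc
      rw [hM0] at hftc
      linarith
  obtain ⟨zstar, hzs, hzeq⟩ := exists_eq_avg hh (fun z => q z tstar) (sliceq tstar htstar)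
  refine ⟨zstar, hzs, ?_⟩
  rw [hzeq]
  have : (∫ x in (0:ℝ)..h, q x tstar) = M tstar := rfl
  rw [this, hMval]
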